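/- Let f, g be differentiable on [a,b] with g > 0 on [a,b] and g' > 0 on [a,b). Define Y_{f,g}(x) = (f'(x)/g'(x))·g(x) − f(x). If f'/g' is increasing on [a,b] and Y_{f,g}(b) ≤ 0, then f/g is decreasing on [a,b]. -/

import Mathlib

open Set

theorem second_kind_rule_decreasing (a b : ℝ) (hab : a < b) (f g : ℝ → ℝ)
    (hf : ∀ x ∈ Icc a b, DifferentiableAt ℝ f x)
    (hg : ∀ x ∈ Icc a b, DifferentiableAt ℝ g x)
    (hgpos : ∀ x ∈ Icc a b, 0 < g x)
    (hg' : ∀ x ∈ Ico a b, 0 < deriv g x)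
    (hmono : MonotoneOn (fun x => deriv f x / deriv g x) (Icc a b))
    (hYb : deriv f b / deriv g b * g b - f b ≤ 0) :
    AntitoneOn (fun x => f x / g x) (Icc a b) := by
  have hfc : ContinuousOn f (Icc a b) := fun x hx => (hf x hx).continuousAt.continuousWithinAt
  have hgc : ContinuousOn g (Icc a b) := fun x hx => (hg x hx).continuousAt.continuousWithinAt
  -- Y ≤ 0 on Ico a b
  have hY : ∀ x ∈ Ico a b, deriv f x / deriv g x * g x - f x ≤ 0 := by
    intro x hx
    have hxb : x < b := hx.2
    have hxIcc : x ∈ Icc a b := ⟨hx.1, hx.2.le⟩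
    have hsub : Icc x b ⊆ Icc a b := Icc_subset_Icc hx.1 le_rfl
    have hsub' : Ioo x b ⊆ Ico a b := fun y hy => ⟨hx.1.trans hy.1.le, hy.2⟩
    -- g is strictly monotone on [x, b]
    have hgmono : StrictMonoOn g (Icc x b) :=
      strictMonoOn_of_deriv_pos (convex_Icc x b) (hgc.mono hsub)
        (by
          intro y hy
          rw [interior_Icc] at hy
          exact hg' y (hsub' hy))
    have hgxb : g x < g b := hgmono (left_mem_Icc.2 hxb.le) (right_mem_Icc.2 hxb.le) hxb
    obtain ⟨c, hc, hcc⟩ := exists_ratio_deriv_eq_ratio_slope f hxb (hfc.mono hsub)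
        (fun y hy => (hf y (hsub (Ioo_subset_Icc_self hy))).differentiableWithinAt)
        g (hgc.mono hsub)
        (fun y hy => (hg y (hsub (Ioo_subset_Icc_self hy))).differentiableWithinAt)
    have hcIcc : c ∈ Icc a b := ⟨hx.1.trans hc.1.le, hc.2.le⟩
    have hgc' : 0 < deriv g c := hg' c (hsub' hc)
    have hgx' : 0 < deriv g x := hg' x hx
    -- r c ≤ r b and r x ≤ r b
    have h1 : deriv f c / deriv g c ≤ deriv f b / deriv g b :=
      hmono hcIcc (right_mem_Icc.2 hab.le) hc.2.le
    have h2 : deriv f x / deriv g x ≤ deriv f b / deriv g b :=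
      hmono hxIcc (right_mem_Icc.2 hab.le) hxb.le
    -- from Cauchy MVT: f b - f x = (g b - g x) * (deriv f c / deriv g c)
    have h3 : f b - f x = (g b - g x) * (deriv f c / deriv g c) := by
      field_simp
      linarith [hcc]
    have h4 : f b - f x ≤ (g b - g x) * (deriv f b / deriv g b) := by
      rw [h3]
      exact mul_le_mul_of_nonneg_left h1 (by linarith)
    have hgx : 0 < g x := hgpos x hxIcc
    nlinarith [mul_le_mul_of_nonneg_right h2 hgx.le]
  -- now conclude by the derivative test
  apply antitoneOn_of_deriv_nonpos (convex_Icc a b)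
  · exact ContinuousOn.div hfc hgc (fun x hx => (hgpos x hx).ne')
  · intro x hx
    rw [interior_Icc] at hx
    have hxIcc : x ∈ Icc a b := Ioo_subset_Icc_self hx
    exact ((hf x hxIcc).div (hg x hxIcc) (hgpos x hxIcc).ne').differentiableWithinAt
  · intro x hx
    rw [interior_Icc] at hx
    have hxIcc : x ∈ Icc a b := Ioo_subset_Icc_self hx
    have hxIco : x ∈ Ico a b := ⟨hx.1.le, hx.2⟩
    show deriv (f / g) x ≤ 0
    rw [deriv_div (hf x hxIcc) (hg x hxIcc) (hgpos x hxIcc).ne']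
    apply div_nonpos_of_nonpos_of_nonneg _ (sq_nonneg _)
    have hYx := hY x hxIco
    have hgx' : 0 < deriv g x := hg' x hxIco
    have hgx : 0 < g x := hgpos x hxIcc
    have : deriv f x / deriv g x * g x = deriv f x * g x / deriv g x := by ring
    nlinarith [mul_le_mul_of_nonneg_right hYx hgx'.le,
      mul_div_cancel₀ (deriv f x) hgx'.ne']
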